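/- Let Ĩ, J be random variables on finite sets with I(Ĩ;J) < β, and α ∈ (0,1). Then there exists a random variable I on ℐ jointly distributed with (Ĩ, J) such that I − Ĩ − J is a Markov chain, P(I ≠ Ĩ) ≤ α, P_I = P_{Ĩ}, I(I;J) < β, and D(P_I ⊗ P_J ‖ P_{I,J}) ≤ √(2β)·log(1/α). -/

import Mathlib

open Finset

section
variable {I J : Type*} [Fintype I] [Fintype J] [DecidableEq I]

/-- Marginal of a joint pmf on the first coordinate. -/
noncomputable def margI (p : I × J → ℝ) : I → ℝ := fun i => ∑ j, p (i, j)

/-- Marginal of a joint pmf on the second coordinate. -/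
noncomputable def margJ (p : I × J → ℝ) : J → ℝ := fun j => ∑ i, p (i, j)

open Classical in
/-- Kullback–Leibler divergence (base 2), summed over the support of the first argument. -/
noncomputable def KL {X : Type*} [Fintype X] (P Q : X → ℝ) : ℝ :=
  ∑ x, if 0 < P x then P x * Real.logb 2 (P x / Q x) else 0

/-- Mutual information `I(Ĩ;J) = D(P_{Ĩ,J} ‖ P_{Ĩ}⊗P_J)` (base-2 logarithms). -/
noncomputable def mutInfo (p : I × J → ℝ) : ℝ :=
  KL p (fun x => margI p x.1 * margJ p x.2)

/-- `x - m ≤ x log (x/m)` for `x ≥ 0`, `m > 0`. -/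
lemma aux_log_self_sub {x m : ℝ} (hx : 0 ≤ x) (hm : 0 < m) :
    x - m ≤ x * Real.log (x / m) := by
  rcases eq_or_lt_of_le hx with h | h
  · simp [← h]; linarith
  · have h1 : Real.log (m / x) ≤ m / x - 1 :=
      Real.log_le_sub_one_of_pos (by positivity)
    have h2 : Real.log (x / m) = - Real.log (m / x) := by
      rw [← Real.log_inv]; congr 1; field_simp
    rw [h2]
    have h3 : x * (m / x - 1) = m - x := by field_simp
    nlinarith [mul_le_mul_of_nonneg_left h1 h.le]

/-- Supporting-line convexity inequality in nats. -/
lemma aux_supporting {a c α : ℝ} (hα0 : 0 < α) (hα1 : α < 1) (ha : 0 ≤ a) (hc : 0 < c) :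
    ((1-α)*a + α*c) * Real.log (((1-α)*a + α*c) / c) ≤ (1-α) * (a * Real.log (a / c)) := by
  set m : ℝ := (1-α)*a + α*c with hm_def
  have hm : 0 < m := by nlinarith
  have h1 : a - m ≤ a * Real.log (a / m) := aux_log_self_sub ha hm
  have h2 : c - m ≤ c * Real.log (c / m) := aux_log_self_sub hc.le hm
  rcases eq_or_lt_of_le ha with h | h
  · -- a = 0 : LHS = α c log α ≤ 0
    have ha0 : a = 0 := h.symm
    have hmc : m / c = α := by rw [hm_def, ha0]; field_simp; ring
    have hlog : Real.log (m / c) ≤ 0 := by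
      rw [hmc]; exact Real.log_nonpos hα0.le hα1.le
    have : m * Real.log (m / c) ≤ 0 := mul_nonpos_of_nonneg_of_nonpos hm.le hlog
    simp [ha0]; linarith
  · -- a > 0
    have hla : Real.log (a / c) = Real.log a - Real.log c := Real.log_div h.ne' hc.ne'
    have hlm : Real.log (m / c) = Real.log m - Real.log c := Real.log_div hm.ne' hc.ne'
    have hlam : Real.log (a / m) = Real.log a - Real.log m := Real.log_div h.ne' hm.ne'
    have hlcm : Real.log (c / m) = Real.log c - Real.log m := Real.log_div hc.ne' hm.ne'
    rw [hla, hlm]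
    rw [hlam] at h1; rw [hlcm] at h2
    nlinarith [mul_le_mul_of_nonneg_left h1 (by linarith : (0:ℝ) ≤ 1 - α),
      mul_le_mul_of_nonneg_left h2 hα0.le]

/-- Pointwise Hellinger bound. -/
lemma aux_hellinger {a b : ℝ} (ha : 0 ≤ a) (hb : 0 < b) :
    (Real.sqrt a - Real.sqrt b)^2 ≤ (if 0 < a then a * Real.log (a / b) else 0) - a + b := by
  rcases eq_or_lt_of_le ha with h | h
  · rw [if_neg (by rw [← h]; exact lt_irrefl 0), ← h]
    simp [Real.sq_sqrt hb.le]
  · rw [if_pos h]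
    set s := Real.sqrt a with hs_def
    set t := Real.sqrt b with ht_def
    have hs : 0 < s := Real.sqrt_pos.2 h
    have ht : 0 < t := Real.sqrt_pos.2 hb
    have hsa : s^2 = a := Real.sq_sqrt ha
    have htb : t^2 = b := Real.sq_sqrt hb.le
    have hlog : Real.log (a / b) = 2 * Real.log (s / t) := by
      rw [← hsa, ← htb, ← div_pow, Real.log_pow]; push_cast; ring
    have h1 : Real.log (t / s) ≤ t / s - 1 := Real.log_le_sub_one_of_pos (by positivity)
    have h2 : Real.log (s / t) = - Real.log (t / s) := by
      rw [← Real.log_inv]; congr 1; field_simp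
    rw [hlog, ← hsa, ← htb]
    have h3 : s * (t / s - 1) = t - s := by field_simp
    have h4 : 1 - t / s ≤ Real.log (s / t) := by rw [h2]; linarith
    have h5 : s^2 - s * t ≤ s^2 * Real.log (s / t) := by
      have := mul_le_mul_of_nonneg_left h4 (by positivity : (0:ℝ) ≤ s^2)
      calc s^2 - s*t = s^2 * (1 - t/s) := by field_simp
        _ ≤ s^2 * Real.log (s/t) := this
    nlinarith

/-- Pointwise AM–GM log bound (base 2). -/
lemma aux_amgm_pt {α q a : ℝ} (hα0 : 0 < α) (hα1 : α < 1) (hq : 0 < q) (ha : 0 ≤ a) :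
    q * Real.logb 2 (q / ((1-α)*a + α*q)) ≤ max (q - a) 0 * Real.logb 2 (1/α) := by
  set m : ℝ := (1-α)*a + α*q with hm_def
  have hm : 0 < m := by nlinarith
  rcases le_or_gt q a with h | h
  · have hmax : max (q - a) 0 = 0 := max_eq_right (by linarith)
    rw [hmax, zero_mul]
    have hqm : q ≤ m := by nlinarith
    have : Real.logb 2 (q / m) ≤ 0 :=
      Real.logb_nonpos one_lt_two (by positivity) (by rw [div_le_one hm]; exact hqm)
    exact mul_nonpos_of_nonneg_of_nonpos hq.le this
  · have hmax : max (q - a) 0 = q - a := max_eq_left (by linarith)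
    rw [hmax]
    set r : ℝ := a / q with hr_def
    have hr0 : 0 ≤ r := by positivity
    have hr1 : r < 1 := by rw [hr_def, div_lt_one hq]; exact h
    have hgm : α ^ (1 - r) ≤ m / q := by
      have := Real.geom_mean_le_arith_mean2_weighted
        (by linarith : (0:ℝ) ≤ 1 - r) hr0 hα0.le (zero_le_one) (by ring)
      rw [Real.one_rpow, mul_one] at this
      calc α ^ (1-r) ≤ (1-r)*α + r*1 := this
        _ = m / q := by rw [hm_def, hr_def]; field_simp; ring
    have hαr : (0:ℝ) < α ^ (1 - r) := Real.rpow_pos_of_pos hα0 _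
    have hqm2 : q / m ≤ (α ^ (1 - r))⁻¹ := by
      rw [← inv_div m q]
      exact inv_anti₀ hαr hgm
    have hlog2 : Real.logb 2 ((α ^ (1-r))⁻¹) = (1-r) * Real.logb 2 (1/α) := by
      rw [Real.logb_inv, one_div, Real.logb_inv, Real.logb, Real.logb, Real.log_rpow hα0]
      ring
    calc q * Real.logb 2 (q/m) ≤ q * ((1-r) * Real.logb 2 (1/α)) := by
          refine mul_le_mul_of_nonneg_left ?_ hq.le
          rw [← hlog2]
          exact Real.logb_le_logb_of_le one_lt_two (by positivity) hqm2
      _ = (q - a) * Real.logb 2 (1/α) := by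
          have hqr : q * (1 - r) = q - a := by rw [hr_def]; field_simp
          rw [← mul_assoc, hqr]

/-- Convexity inequality in base-2 form, with the support guard. -/
lemma aux_conv_logb {a c α : ℝ} (hα0 : 0 < α) (hα1 : α < 1) (ha : 0 ≤ a) (hc : 0 < c) :
    ((1-α)*a + α*c) * Real.logb 2 (((1-α)*a + α*c)/c)
      ≤ (1-α) * (if 0 < a then a * Real.logb 2 (a/c) else 0) := by
  have hn := aux_supporting hα0 hα1 ha hc
  have hlog2 : (0:ℝ) < Real.log 2 := Real.log_pos one_lt_two
  by_cases h : 0 < a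
  · rw [if_pos h]
    calc ((1-α)*a + α*c) * Real.logb 2 (((1-α)*a + α*c)/c)
        = (((1-α)*a + α*c) * Real.log (((1-α)*a + α*c)/c)) / Real.log 2 := by
          rw [Real.logb]; ring
      _ ≤ ((1-α) * (a * Real.log (a/c))) / Real.log 2 := by gcongr
      _ = (1-α) * (a * Real.logb 2 (a/c)) := by rw [Real.logb]; ring
  · have ha0 : a = 0 := le_antisymm (not_lt.1 h) ha
    rw [if_neg h, mul_zero]
    rw [ha0] at hn ⊢
    simp only [Real.log_zero, zero_div, mul_zero] at hn
    have hn' : ((1-α)*0 + α*c) * Real.log (((1-α)*0 + α*c)/c) ≤ 0 := by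
      simpa using hn
    calc ((1-α)*0 + α*c) * Real.logb 2 (((1-α)*0 + α*c)/c)
        = (((1-α)*0 + α*c) * Real.log (((1-α)*0 + α*c)/c)) / Real.log 2 := by
          rw [Real.logb]; ring
      _ ≤ 0 := div_nonpos_of_nonpos_of_nonneg hn' hlog2.le

/-- Lemma 6 of the paper: if `I(Ĩ;J) < β` and `α ∈ (0,1)`, there is a joint
distribution `T` of `(I, Ĩ, J)` extending `P_{Ĩ,J}` such that `I − Ĩ − J` is a Markov
chain, `P(I ≠ Ĩ) ≤ α`, `P_I = P_{Ĩ}`, `I(I;J) < β`, and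
`D(P_I ⊗ P_J ‖ P_{I,J}) ≤ √(2β)·log(1/α)`. -/
theorem exists_faking_variable (p : I × J → ℝ)
    (hp : (∀ x, 0 ≤ p x) ∧ ∑ x, p x = 1)
    (hIpos : ∀ i, 0 < margI p i) (hJpos : ∀ j, 0 < margJ p j)
    (β : ℝ) (hβ : 0 < β) (hmi : mutInfo p < β)
    (α : ℝ) (hα : α ∈ Set.Ioo (0 : ℝ) 1) :
    ∃ T : I × I × J → ℝ,
      (∀ x, 0 ≤ T x) ∧ (∑ x, T x = 1) ∧
      -- the `(Ĩ, J)`-marginal of `T` is `p`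
      (∀ i' j, ∑ i, T (i, i', j) = p (i', j)) ∧
      -- Markov chain `I − Ĩ − J`
      (∀ i i' j, T (i, i', j) * margI p i' = (∑ j', T (i, i', j')) * p (i', j)) ∧
      -- `P(I ≠ Ĩ) ≤ α`
      (∑ x : I × I × J, (if x.1 = x.2.1 then 0 else T x)) ≤ α ∧
      -- `P_I = P_Ĩ`
      (∀ i, (∑ i', ∑ j, T (i, i', j)) = margI p i) ∧
      -- `I(I;J) < β`
      mutInfo (fun ij : I × J => ∑ i', T (ij.1, i', ij.2)) < β ∧
      -- `D(P_I ⊗ P_J ‖ P_{I,J}) ≤ √(2β)·log(1/α)`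
      KL (fun ij : I × J => (∑ i', ∑ j, T (ij.1, i', j)) * margJ p ij.2)
          (fun ij : I × J => ∑ i', T (ij.1, i', ij.2))
        ≤ Real.sqrt (2 * β) * Real.logb 2 (1 / α) := by
  obtain ⟨hp0, hp1⟩ := hp
  obtain ⟨hα0, hα1⟩ := hα
  have hmI0 : ∀ i, (0:ℝ) ≤ margI p i := fun i => (hIpos i).le
  have hsum_margI : ∑ i, margI p i = 1 := by
    rw [← hp1, Fintype.sum_prod_type]; rfl
  have hsum_margJ : ∑ j, margJ p j = 1 := by
    rw [← hp1, Fintype.sum_prod_type]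
    exact Finset.sum_comm
  have hq : ∀ x : I × J, 0 < margI p x.1 * margJ p x.2 :=
    fun x => mul_pos (hIpos _) (hJpos _)
  set T : I × I × J → ℝ :=
    fun x => ((if x.1 = x.2.1 then 1 - α else 0) + α * margI p x.1) * p x.2 with hT_def
  have hT0 : ∀ x, 0 ≤ T x := by
    intro x
    have h1 : (0:ℝ) ≤ if x.1 = x.2.1 then 1 - α else 0 := by
      split
      · linarith
      · exact le_refl 0
    exact mul_nonneg (add_nonneg h1 (mul_nonneg hα0.le (hmI0 _))) (hp0 _)
  have hrow : ∀ i i', ∑ j', T (i, i', j')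
      = ((if i = i' then 1 - α else 0) + α * margI p i) * margI p i' := by
    intro i i'
    show ∑ j', ((if i = i' then 1 - α else 0) + α * margI p i) * p (i', j') = _
    rw [← Finset.mul_sum]; rfl
  have hcol : ∀ i' j, ∑ i, T (i, i', j) = p (i', j) := by
    intro i' j
    have hw : ∑ i, ((if i = i' then 1 - α else 0) + α * margI p i) = 1 := by
      rw [Finset.sum_add_distrib, Finset.sum_ite_eq' Finset.univ i' (fun _ => (1:ℝ) - α),
        ← Finset.mul_sum, hsum_margI]
      simp
    calc ∑ i, T (i, i', j)
        = (∑ i, ((if i = i' then 1 - α else 0) + α * margI p i)) * p (i', j) := by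
          rw [Finset.sum_mul]
      _ = p (i', j) := by rw [hw, one_mul]
  have hsml : ∀ i : I, ∑ i', α * margI p i * margI p i' = α * margI p i := by
    intro i
    rw [← Finset.mul_sum, hsum_margI, mul_one]
  have hPI : ∀ i, (∑ i', ∑ j, T (i, i', j)) = margI p i := by
    intro i
    calc (∑ i', ∑ j, T (i, i', j))
        = ∑ i', ((if i = i' then 1 - α else 0) + α * margI p i) * margI p i' :=
          Finset.sum_congr rfl fun i' _ => hrow i i'
      _ = (∑ i', if i = i' then (1-α) * margI p i' else 0)
            + ∑ i', α * margI p i * margI p i' := by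
          rw [← Finset.sum_add_distrib]
          refine Finset.sum_congr rfl fun i' _ => by split <;> ring
      _ = (1-α) * margI p i + α * margI p i := by
          rw [Finset.sum_ite_eq Finset.univ i (fun i' => (1-α) * margI p i'),
            if_pos (Finset.mem_univ i), hsml i]
      _ = margI p i := by ring
  have hm_eq : ∀ i j, (∑ i', T (i, i', j))
      = (1-α) * p (i, j) + α * (margI p i * margJ p j) := by
    intro i j
    calc (∑ i', T (i, i', j))
        = (∑ i', if i = i' then (1-α) * p (i', j) else 0)
            + ∑ i', α * margI p i * p (i', j) := by
          rw [← Finset.sum_add_distrib]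
          refine Finset.sum_congr rfl fun i' _ => by
            show ((if i = i' then 1 - α else 0) + α * margI p i) * p (i', j) = _
            split <;> ring
      _ = (1-α) * p (i, j) + α * (margI p i * margJ p j) := by
          rw [Finset.sum_ite_eq Finset.univ i (fun i' => (1-α) * p (i', j)),
            if_pos (Finset.mem_univ i)]
          congr 1
          simp only [mul_assoc]
          rw [← Finset.mul_sum, ← Finset.mul_sum]
          rfl
  have hsumT : ∑ x, T x = 1 := by
    rw [Fintype.sum_prod_type, Finset.sum_comm, ← hp1]
    exact Finset.sum_congr rfl fun y _ => hcol y.1 y.2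
  have hmarkov : ∀ i i' j, T (i, i', j) * margI p i' = (∑ j', T (i, i', j')) * p (i', j) := by
    intro i i' j
    rw [hrow]
    show ((if i = i' then 1 - α else 0) + α * margI p i) * p (i', j) * margI p i' = _
    ring
  have hdiff : (∑ x : I × I × J, (if x.1 = x.2.1 then 0 else T x)) ≤ α := by
    have hle : ∀ x : I × I × J,
        (if x.1 = x.2.1 then 0 else T x) ≤ α * margI p x.1 * p x.2 := by
      intro x
      split
      · exact mul_nonneg (mul_nonneg hα0.le (hmI0 _)) (hp0 _)
      · show ((if x.1 = x.2.1 then 1 - α else 0) + α * margI p x.1) * p x.2 ≤ _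
        rw [if_neg (by assumption)]
        exact le_of_eq (by ring)
    calc (∑ x : I × I × J, (if x.1 = x.2.1 then 0 else T x))
        ≤ ∑ x : I × I × J, α * margI p x.1 * p x.2 := Finset.sum_le_sum fun x _ => hle x
      _ = α := by
        rw [Fintype.sum_prod_type]
        have h1 : ∀ i : I, ∑ y : I × J, α * margI p i * p y = α * margI p i := by
          intro i; rw [← Finset.mul_sum, hp1, mul_one]
        rw [Finset.sum_congr rfl fun i _ => h1 i, ← Finset.mul_sum, hsum_margI, mul_one]
  have hmpos : ∀ x : I × J, 0 < (1-α) * p x + α * (margI p x.1 * margJ p x.2) := by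
    intro x
    nlinarith [hq x, hp0 x]
  have hmargIP : ∀ i, margI (fun ij : I × J => ∑ i', T (ij.1, i', ij.2)) i = margI p i := by
    intro i
    show ∑ j, (∑ i', T (i, i', j)) = margI p i
    calc ∑ j, (∑ i', T (i, i', j))
        = ∑ j, ((1-α) * p (i, j) + α * (margI p i * margJ p j)) :=
          Finset.sum_congr rfl fun j _ => hm_eq i j
      _ = (1-α) * (∑ j, p (i, j)) + α * (margI p i * ∑ j, margJ p j) := by
          rw [Finset.sum_add_distrib]
          simp only [← Finset.mul_sum]
      _ = margI p i := by rw [hsum_margJ]; simp only [margI]; ring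
  have hmargJP : ∀ j, margJ (fun ij : I × J => ∑ i', T (ij.1, i', ij.2)) j = margJ p j := by
    intro j
    show ∑ i, (∑ i', T (i, i', j)) = margJ p j
    calc ∑ i, (∑ i', T (i, i', j))
        = ∑ i, ((1-α) * p (i, j) + α * (margI p i * margJ p j)) :=
          Finset.sum_congr rfl fun i _ => hm_eq i j
      _ = (1-α) * (∑ i, p (i, j)) + α * ((∑ i, margI p i) * margJ p j) := by
          rw [Finset.sum_add_distrib]
          simp only [← Finset.mul_sum, ← Finset.sum_mul]
      _ = margJ p j := by rw [hsum_margI]; simp only [margJ]; ring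
  have hmut : mutInfo (fun ij : I × J => ∑ i', T (ij.1, i', ij.2)) < β := by
    have hkey : mutInfo (fun ij : I × J => ∑ i', T (ij.1, i', ij.2)) ≤ (1-α) * mutInfo p := by
      unfold mutInfo KL
      rw [Finset.mul_sum]
      refine Finset.sum_le_sum fun x _ => ?_
      have e1 : (∑ i', T (x.1, i', x.2)) = (1-α) * p x + α * (margI p x.1 * margJ p x.2) :=
        hm_eq x.1 x.2
      beta_reduce
      rw [hmargIP, hmargJP, e1, if_pos (hmpos x)]
      exact aux_conv_logb hα0 hα1 (hp0 x) (hq x)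
    rcases le_or_gt 0 (mutInfo p) with h | h
    · nlinarith
    · nlinarith
  have hsumq : ∑ x : I × J, margI p x.1 * margJ p x.2 = 1 := by
    rw [Fintype.sum_prod_type]
    have h1 : ∀ i, ∑ j, margI p i * margJ p j = margI p i := by
      intro i; rw [← Finset.mul_sum, hsum_margJ, mul_one]
    rw [Finset.sum_congr rfl fun i _ => h1 i, hsum_margI]
  have hhel : ∑ x : I × J, (Real.sqrt (p x) - Real.sqrt (margI p x.1 * margJ p x.2))^2
      ≤ Real.log 2 * β := by
    have hnats : ∀ x : I × J,
        (if 0 < p x then p x * Real.log (p x / (margI p x.1 * margJ p x.2)) else 0)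
        = Real.log 2 * (if 0 < p x then p x * Real.logb 2 (p x / (margI p x.1 * margJ p x.2)) else 0) := by
      intro x
      split
      · rw [Real.logb]
        field_simp
      · rw [mul_zero]
    calc ∑ x : I × J, (Real.sqrt (p x) - Real.sqrt (margI p x.1 * margJ p x.2))^2
        ≤ ∑ x : I × J, ((if 0 < p x then p x * Real.log (p x / (margI p x.1 * margJ p x.2)) else 0)
            - p x + margI p x.1 * margJ p x.2) :=
          Finset.sum_le_sum fun x _ => aux_hellinger (hp0 x) (hq x)
      _ = (∑ x : I × J, (if 0 < p x then p x * Real.log (p x / (margI p x.1 * margJ p x.2)) else 0))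
            - 1 + 1 := by
          rw [Finset.sum_add_distrib, Finset.sum_sub_distrib, hp1, hsumq]
      _ = Real.log 2 * mutInfo p := by
          rw [Finset.sum_congr rfl fun x _ => hnats x, ← Finset.mul_sum]
          unfold mutInfo KL
          ring
      _ ≤ Real.log 2 * β := by nlinarith [Real.log_pos one_lt_two]
  have hTV : ∑ x : I × J, max (margI p x.1 * margJ p x.2 - p x) 0 ≤ Real.sqrt (2*β) := by
    have hg2 : ∑ x : I × J, (Real.sqrt (p x) + Real.sqrt (margI p x.1 * margJ p x.2))^2 ≤ 4 := by
      have hpt : ∀ x : I × J, (Real.sqrt (p x) + Real.sqrt (margI p x.1 * margJ p x.2))^2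
          ≤ 2 * p x + 2 * (margI p x.1 * margJ p x.2) := by
        intro x
        have ha := Real.sq_sqrt (hp0 x)
        have hb := Real.sq_sqrt (hq x).le
        nlinarith [sq_nonneg (Real.sqrt (p x) - Real.sqrt (margI p x.1 * margJ p x.2))]
      calc ∑ x : I × J, (Real.sqrt (p x) + Real.sqrt (margI p x.1 * margJ p x.2))^2
          ≤ ∑ x : I × J, (2 * p x + 2 * (margI p x.1 * margJ p x.2)) :=
            Finset.sum_le_sum fun x _ => hpt x
        _ = 4 := by
            rw [Finset.sum_add_distrib, ← Finset.mul_sum, ← Finset.mul_sum, hp1, hsumq]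
            norm_num
    have hfg : ∀ x : I × J,
        |Real.sqrt (p x) - Real.sqrt (margI p x.1 * margJ p x.2)|
          * (Real.sqrt (p x) + Real.sqrt (margI p x.1 * margJ p x.2))
        = |p x - margI p x.1 * margJ p x.2| := by
      intro x
      have ha := Real.sq_sqrt (hp0 x)
      have hb := Real.sq_sqrt (hq x).le
      have hgn : 0 ≤ Real.sqrt (p x) + Real.sqrt (margI p x.1 * margJ p x.2) :=
        add_nonneg (Real.sqrt_nonneg _) (Real.sqrt_nonneg _)
      rw [← abs_of_nonneg hgn, ← abs_mul]
      congr 1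
      nlinarith [Real.sqrt_nonneg (p x), Real.sqrt_nonneg (margI p x.1 * margJ p x.2)]
    have hCS := Finset.sum_mul_sq_le_sq_mul_sq Finset.univ
      (fun x : I × J => |Real.sqrt (p x) - Real.sqrt (margI p x.1 * margJ p x.2)|)
      (fun x : I × J => Real.sqrt (p x) + Real.sqrt (margI p x.1 * margJ p x.2))
    rw [Finset.sum_congr rfl fun x _ => hfg x] at hCS
    simp only [sq_abs] at hCS
    have habs : (∑ x : I × J, |p x - margI p x.1 * margJ p x.2|)^2 ≤ Real.log 2 * β * 4 := by
      calc (∑ x : I × J, |p x - margI p x.1 * margJ p x.2|)^2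
          ≤ (∑ x : I × J, (Real.sqrt (p x) - Real.sqrt (margI p x.1 * margJ p x.2))^2)
            * (∑ x : I × J, (Real.sqrt (p x) + Real.sqrt (margI p x.1 * margJ p x.2))^2) := hCS
        _ ≤ Real.log 2 * β * 4 := by
            have hnn : 0 ≤ ∑ x : I × J, (Real.sqrt (p x) - Real.sqrt (margI p x.1 * margJ p x.2))^2 :=
              Finset.sum_nonneg fun x _ => sq_nonneg _
            nlinarith [hhel, hg2]
    have hmaxabs : ∑ x : I × J, max (margI p x.1 * margJ p x.2 - p x) 0
        = (∑ x : I × J, |p x - margI p x.1 * margJ p x.2|) / 2 := by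
      have hpt : ∀ x : I × J, max (margI p x.1 * margJ p x.2 - p x) 0
          = (|p x - margI p x.1 * margJ p x.2| + (margI p x.1 * margJ p x.2 - p x)) / 2 := by
        intro x
        rcases le_total (p x) (margI p x.1 * margJ p x.2) with h | h
        · rw [max_eq_left (by linarith), abs_of_nonpos (by linarith)]
          ring
        · rw [max_eq_right (by linarith), abs_of_nonneg (by linarith)]
          ring
      calc ∑ x : I × J, max (margI p x.1 * margJ p x.2 - p x) 0
          = ∑ x : I × J, (|p x - margI p x.1 * margJ p x.2|
              + (margI p x.1 * margJ p x.2 - p x)) / 2 :=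
            Finset.sum_congr rfl fun x _ => hpt x
        _ = ((∑ x : I × J, |p x - margI p x.1 * margJ p x.2|) + (1 - 1)) / 2 := by
            rw [← Finset.sum_div, Finset.sum_add_distrib, Finset.sum_sub_distrib, hp1, hsumq]
        _ = (∑ x : I × J, |p x - margI p x.1 * margJ p x.2|) / 2 := by ring
    rw [hmaxabs]
    have habsnn : 0 ≤ ∑ x : I × J, |p x - margI p x.1 * margJ p x.2| :=
      Finset.sum_nonneg fun x _ => abs_nonneg _
    rw [Real.le_sqrt (by positivity) (by positivity)]
    nlinarith [habs, Real.log_le_sub_one_of_pos (by norm_num : (0:ℝ) < 2), hβ]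
  have hfinal : KL (fun ij : I × J => (∑ i', ∑ j, T (ij.1, i', j)) * margJ p ij.2)
      (fun ij : I × J => ∑ i', T (ij.1, i', ij.2))
      ≤ Real.sqrt (2*β) * Real.logb 2 (1/α) := by
    have hfeq : (fun ij : I × J => (∑ i', ∑ j, T (ij.1, i', j)) * margJ p ij.2)
        = fun ij : I × J => margI p ij.1 * margJ p ij.2 :=
      funext fun ij => by rw [hPI]
    rw [hfeq]
    have hlogα : 0 ≤ Real.logb 2 (1/α) :=
      Real.logb_nonneg one_lt_two (one_le_one_div hα0 hα1.le)
    have hstep : KL (fun ij : I × J => margI p ij.1 * margJ p ij.2)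
        (fun ij : I × J => ∑ i', T (ij.1, i', ij.2))
        ≤ (∑ x : I × J, max (margI p x.1 * margJ p x.2 - p x) 0) * Real.logb 2 (1/α) := by
      unfold KL
      rw [Finset.sum_mul]
      refine Finset.sum_le_sum fun x _ => ?_
      beta_reduce
      rw [if_pos (hq x), hm_eq x.1 x.2]
      exact aux_amgm_pt hα0 hα1 (hq x) (hp0 x)
    exact hstep.trans (mul_le_mul_of_nonneg_right hTV hlogα)
  exact ⟨T, hT0, hsumT, hcol, hmarkov, hdiff, hPI, hmut, hfinal⟩

end
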